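/- Let $(S_i)_{i \geq 0}$ be a supermartingale with respect to a filtration $(\mathcal{F}_i)_{i \geq 0}$ with increments $\Delta S_i = S_{i+1} - S_i$. Suppose $\sum_{i \geq 0} \mathbb{E}[|\Delta S_i| \mid \mathcal{F}_i] \leq C$ almost surely and $|\Delta S_i| \leq V$ for all $i$ almost surely. Then for any $z > 0$, $\mathbb{P}[\exists i \geq 1 : S_i \geq S_0 + z] \leq \exp\big(-\frac{z^2}{2V(C+z)}\big)$. -/

import Mathlib

set_option maxHeartbeats 1000000


open MeasureTheory Finset

lemma exp_quad_bound {x t : ℝ} (ht : t ≤ 1) (h : |x| ≤ t) :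
    Real.exp x ≤ 1 + x + (1/2 + 2/9 * t) * x ^ 2 := by
  have hx1 : |x| ≤ 1 := h.trans ht
  have h3 := Real.exp_bound hx1 (by norm_num : 0 < 3)
  have hsum : ∑ m ∈ Finset.range 3, x ^ m / m.factorial = 1 + x + x ^ 2 / 2 := by
    simp [Finset.sum_range_succ, Nat.factorial]
  rw [hsum] at h3
  have h4 := (abs_sub_le_iff.1 h3).1
  have h5 : |x| ^ 3 = |x| * x ^ 2 := by
    rw [pow_succ, sq_abs]; ring
  rw [h5] at h4
  norm_num [Nat.factorial] at h4
  nlinarith [sq_nonneg x, abs_nonneg x]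

lemma ville_ineq {Ω : Type*} {m0 : MeasurableSpace Ω} {μ : Measure Ω} [IsProbabilityMeasure μ]
    (𝓕 : Filtration ℕ m0) (M : ℕ → Ω → ℝ) (hM : Supermartingale M 𝓕 μ)
    (hnonneg : ∀ n ω, 0 ≤ M n ω) {ε : ℝ} (hε : 0 < ε) :
    μ {ω | ∃ n, ε ≤ M n ω} ≤ ENNReal.ofReal ((∫ ω, M 0 ω ∂μ) / ε) := by
  classical
  set A : ℕ → Set Ω := fun n =>
    {ω | ε ≤ (Finset.range (n+1)).sup' nonempty_range_add_one fun k => M k ω} with hA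
  have hmeasA : ∀ n, MeasurableSet (A n) := fun n =>
    measurableSet_le measurable_const (Finset.measurable_range_sup'' fun k _ =>
      (hM.stronglyMeasurable k).measurable.le (𝓕.le k))
  have hunion : {ω | ∃ n, ε ≤ M n ω} = ⋃ n, A n := by
    ext ω
    simp only [Set.mem_setOf_eq, Set.mem_iUnion, hA, Finset.le_sup'_iff, Finset.mem_range]
    constructor
    · rintro ⟨n, hn⟩; exact ⟨n, n, Nat.lt_succ_self n, hn⟩
    · rintro ⟨n, k, _, hk⟩; exact ⟨k, hk⟩
  have hmono : Monotone A := by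
    intro m n hmn ω hω
    refine le_trans hω (Finset.sup'_le _ (fun k => M k ω) fun k hk => Finset.le_sup' (f := fun k => M k ω) ?_)
    rw [Finset.mem_range] at hk ⊢; omega
  rw [hunion, hmono.directed_le.measure_iUnion]
  refine iSup_le fun n => ?_
  set τ : Ω → ℕ∞ := fun ω => ((hittingBtwn M {y : ℝ | ε ≤ y} 0 n ω : ℕ) : ℕ∞) with hτdef
  have hτ : IsStoppingTime 𝓕 τ := hittingBtwn_isStoppingTime hM.stronglyAdapted.adapted measurableSet_Ici
  have hτle : ∀ ω, τ ω ≤ n := fun ω => by simp only [hτdef]; exact_mod_cast hittingBtwn_le (u := M) (s := {y : ℝ | ε ≤ y}) (n := 0) (m := n) ω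
  have hsvneg : stoppedValue (-M) τ = -(stoppedValue M τ) := by
    funext ω; simp [stoppedValue]
  have hSVint : Integrable (stoppedValue M τ) μ := by
    have h := hM.neg.integrable_stoppedValue hτ hτle
    rw [hsvneg] at h
    simpa using h.neg
  have hSVε : ∀ ω ∈ A n, ε ≤ stoppedValue M τ ω := by
    intro ω hω
    rw [hA] at hω
    simp only [Set.mem_setOf_eq, Finset.le_sup'_iff, Finset.mem_range, Nat.lt_succ_iff] at hω
    refine stoppedValue_hittingBtwn_mem ?_
    obtain ⟨j, hj1, hj2⟩ := hω
    exact ⟨j, by simp [hj1], hj2⟩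
  have h1 : ε * (μ (A n)).toReal ≤ ∫ ω in A n, stoppedValue M τ ω ∂μ :=
    setIntegral_ge_of_const_le_real (hmeasA n) (measure_ne_top μ _) hSVε hSVint.integrableOn
  have h2 : ∫ ω in A n, stoppedValue M τ ω ∂μ ≤ ∫ ω, stoppedValue M τ ω ∂μ :=
    setIntegral_le_integral hSVint (Filter.Eventually.of_forall fun ω => hnonneg _ _)
  have h3 : ∫ ω, stoppedValue M τ ω ∂μ ≤ ∫ ω, M 0 ω ∂μ := by
    have h := hM.neg.expected_stoppedValue_mono (isStoppingTime_const 𝓕 0) hτ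
      (fun ω => WithTop.coe_le_coe.2 (Nat.zero_le _)) hτle
    rw [hsvneg] at h
    have hzero : stoppedValue (-M) (fun _ => ((0:ℕ) : WithTop ℕ)) = -(M 0) := by
      funext ω; simp [stoppedValue]
    have e : ∫ x, stoppedValue (-M) (fun _ => ((0:ℕ) : WithTop ℕ)) x ∂μ = -∫ x, M 0 x ∂μ := by
      rw [hzero]; exact integral_neg _
    have e2 : ∫ x, (-stoppedValue M τ) x ∂μ = -∫ x, stoppedValue M τ x ∂μ := integral_neg _
    have h' := (e.symm.trans_le h).trans_eq e2
    linarith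
  have h4 : (μ (A n)).toReal ≤ (∫ ω, M 0 ω ∂μ) / ε := by
    rw [le_div_iff₀ hε]
    nlinarith [h1, h2, h3]
  calc μ (A n) = ENNReal.ofReal ((μ (A n)).toReal) :=
        (ENNReal.ofReal_toReal (measure_ne_top μ _)).symm
    _ ≤ _ := ENNReal.ofReal_le_ofReal h4


/-- Freedman's martingale concentration inequality (simplified form, Lemma 4.3.1):
for a supermartingale `S` with `∑_i E[|ΔS_i| | 𝓕_i] ≤ C` a.s. and `|ΔS_i| ≤ V` a.s.,
`P[∃ i ≥ 1, S_i ≥ S_0 + z] ≤ exp(-z²/(2V(C+z)))`. -/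
theorem freedman_supermartingale_concentration
    {Ω : Type*} {m0 : MeasurableSpace Ω} {μ : Measure Ω} [IsProbabilityMeasure μ]
    (𝓕 : Filtration ℕ m0) (S : ℕ → Ω → ℝ)
    (hS : Supermartingale S 𝓕 μ)
    (C V : ℝ) (hC : 0 < C) (hV : 0 < V)
    (hsum : ∀ᵐ ω ∂μ, ∀ N : ℕ,
      ∑ i ∈ Finset.range N, (μ[fun ω' => |S (i + 1) ω' - S i ω'| | 𝓕 i]) ω ≤ C)
    (hbdd : ∀ i : ℕ, ∀ᵐ ω ∂μ, |S (i + 1) ω - S i ω| ≤ V)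
    (z : ℝ) (hz : 0 < z) :
    μ {ω | ∃ i : ℕ, 1 ≤ i ∧ S 0 ω + z ≤ S i ω}
      ≤ ENNReal.ofReal (Real.exp (-(z ^ 2 / (2 * V * (C + z))))) := by
  classical
  have hCz : 0 < C + z := by linarith
  set t : ℝ := z / (C + z) with ht_def
  have ht0 : 0 < t := div_pos hz hCz
  have ht1 : t < 1 := by rw [ht_def, div_lt_one hCz]; linarith
  set L : ℝ := z / (V * (C + z)) with hL_def
  have hL0 : 0 < L := by rw [hL_def]; positivity
  have hLV : L * V = t := by
    rw [hL_def, ht_def]; field_simp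
  set b : ℝ := (1/2 + 2/9 * t) * L ^ 2 with hb_def
  have hb0 : 0 < b := by
    have h1 : (0:ℝ) < 1/2 + 2/9 * t := by linarith
    exact mul_pos h1 (by positivity)
  set c : ℝ := b * V with hc_def
  have hc0 : 0 < c := mul_pos hb0 hV
  set g : ℕ → Ω → ℝ := fun i => μ[fun ω' => |S (i + 1) ω' - S i ω'| | 𝓕 i] with hg_def
  set M : ℕ → Ω → ℝ :=
    fun n ω => Real.exp (L * (S n ω - S 0 ω) - c * ∑ i ∈ Finset.range n, g i ω) with hM_def
  have hMpos : ∀ n ω, 0 < M n ω := fun n ω => by simp only [hM_def]; exact Real.exp_pos _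
  have hgnn : ∀ i, 0 ≤ᵐ[μ] g i := fun i => by
    simp only [hg_def]
    exact condExp_nonneg (Filter.Eventually.of_forall fun ω => abs_nonneg _)
  have hmeasg : ∀ i, StronglyMeasurable[𝓕 i] (g i) := fun i => by
    simp only [hg_def]; exact stronglyMeasurable_condExp
  have hmeasM : ∀ n, StronglyMeasurable[𝓕 n] (M n) := by
    intro n
    simp only [hM_def]
    apply Real.continuous_exp.comp_stronglyMeasurable
    apply StronglyMeasurable.sub
    · exact stronglyMeasurable_const.mul ((hS.stronglyMeasurable n).sub
        ((hS.stronglyMeasurable 0).mono (𝓕.mono (Nat.zero_le n))))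
    · exact stronglyMeasurable_const.mul (Finset.stronglyMeasurable_fun_sum _ fun i hi =>
        (hmeasg i).mono (𝓕.mono (Finset.mem_range.1 hi).le))
  have haeΔ : ∀ᵐ ω ∂μ, ∀ i, |S (i+1) ω - S i ω| ≤ V := ae_all_iff.2 hbdd
  have haeg : ∀ᵐ ω ∂μ, ∀ i, 0 ≤ g i ω := ae_all_iff.2 hgnn
  have hMbdd : ∀ n, ∀ᵐ ω ∂μ, ‖M n ω‖ ≤ Real.exp (L * (n * V)) := by
    intro n
    filter_upwards [haeΔ, haeg] with ω hΔ hg0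
    rw [Real.norm_eq_abs, abs_of_pos (hMpos n ω)]
    simp only [hM_def]
    apply Real.exp_le_exp.2
    have h1 : S n ω - S 0 ω ≤ n * V := by
      have ht := Finset.sum_range_sub (fun i => S i ω) n
      have h2 : ∑ i ∈ Finset.range n, (S (i+1) ω - S i ω) ≤ ∑ _i ∈ Finset.range n, V :=
        Finset.sum_le_sum fun i _ => (le_abs_self _).trans (hΔ i)
      rw [ht] at h2
      simpa using h2
    have h3 : 0 ≤ ∑ i ∈ Finset.range n, g i ω := Finset.sum_nonneg fun i _ => hg0 i
    nlinarith [mul_le_mul_of_nonneg_left h1 hL0.le, mul_nonneg hc0.le h3]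
  have hMint : ∀ n, Integrable (M n) μ := fun n =>
    Integrable.mono' (integrable_const _) ((hmeasM n).mono (𝓕.le n)).aestronglyMeasurable
      (hMbdd n)
  have hcond : ∀ n, μ[M (n+1) | 𝓕 n] ≤ᵐ[μ] M n := by
    intro n
    have hΔint : Integrable (S (n+1) - S n) μ := (hS.integrable (n+1)).sub (hS.integrable n)
    have hΔm0 : StronglyMeasurable (S (n+1) - S n) :=
      ((hS.stronglyMeasurable (n+1)).mono (𝓕.le _)).sub
        ((hS.stronglyMeasurable n).mono (𝓕.le _))
    have hqint : Integrable (fun ω => (S (n+1) ω - S n ω) * (S (n+1) ω - S n ω)) μ := by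
      refine Integrable.mono' (integrable_const (V*V)) (hΔm0.mul hΔm0).aestronglyMeasurable ?_
      filter_upwards [hbdd n] with ω h
      rw [Real.norm_eq_abs, abs_mul]
      exact mul_le_mul h h (abs_nonneg _) hV.le
    have hGint : Integrable (fun ω => Real.exp (L * (S (n+1) ω - S n ω))) μ := by
      refine Integrable.mono' (integrable_const (Real.exp (L*V)))
        (Real.continuous_exp.comp_stronglyMeasurable
          (stronglyMeasurable_const.mul hΔm0)).aestronglyMeasurable ?_
      filter_upwards [hbdd n] with ω h
      rw [Real.norm_eq_abs, abs_of_pos (Real.exp_pos _)]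
      exact Real.exp_le_exp.2 (mul_le_mul_of_nonneg_left ((le_abs_self _).trans h) hL0.le)
    have hFmeas : StronglyMeasurable[𝓕 n] (fun ω => M n ω * Real.exp (-(c * g n ω))) :=
      (hmeasM n).mul (Real.continuous_exp.comp_stronglyMeasurable
        ((stronglyMeasurable_const.mul (hmeasg n)).neg))
    have hFG : M (n+1) = (fun ω => M n ω * Real.exp (-(c * g n ω))) *
        (fun ω => Real.exp (L * (S (n+1) ω - S n ω))) := by
      funext ω
      simp only [hM_def, Pi.mul_apply]
      rw [← Real.exp_add, ← Real.exp_add, Finset.sum_range_succ]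
      congr 1
      ring
    have hFGint : Integrable ((fun ω => M n ω * Real.exp (-(c * g n ω))) *
        (fun ω => Real.exp (L * (S (n+1) ω - S n ω)))) μ := hFG ▸ hMint (n+1)
    have hpull := condExp_mul_of_stronglyMeasurable_left hFmeas hFGint hGint
    have hΔcond : μ[S (n+1) - S n | 𝓕 n] ≤ᵐ[μ] 0 := by
      have h6 := hS.condExp_ae_le (Nat.le_succ n)
      have h7 := condExp_sub (m := 𝓕 n) (hS.integrable (n+1)) (hS.integrable n)
      have h8 : μ[S n|𝓕 n] = S n :=
        condExp_of_stronglyMeasurable (𝓕.le n) (hS.stronglyMeasurable n) (hS.integrable n)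
      rw [h8] at h7
      filter_upwards [h6, h7] with ω h6ω h7ω
      simp only [Pi.sub_apply] at h7ω
      simp only [Pi.zero_apply]
      rw [h7ω]
      linarith
    have habscond : μ[(fun ω => |S (n+1) ω - S n ω|) | 𝓕 n] = g n := by
      simp only [hg_def]
    have hqcond : μ[(fun ω => (S (n+1) ω - S n ω) * (S (n+1) ω - S n ω)) | 𝓕 n]
        ≤ᵐ[μ] fun ω => V * g n ω := by
      have habsint : Integrable (fun ω => |S (n+1) ω - S n ω|) μ := by
        have := hΔint.abs
        simpa [Pi.sub_apply] using this
      have hle : (fun ω => (S (n+1) ω - S n ω) * (S (n+1) ω - S n ω))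
          ≤ᵐ[μ] V • (fun ω => |S (n+1) ω - S n ω|) := by
        filter_upwards [hbdd n] with ω h
        have h2 := abs_mul_abs_self (S (n+1) ω - S n ω)
        simp only [Pi.smul_apply, smul_eq_mul]
        nlinarith [abs_nonneg (S (n+1) ω - S n ω)]
      refine (condExp_mono hqint (habsint.smul V) hle).trans ?_
      have h9 := condExp_smul (μ := μ) (m := 𝓕 n) V (fun ω => |S (n+1) ω - S n ω|)
      rw [habscond] at h9
      filter_upwards [h9] with ω h9ω
      rw [h9ω]
      simp [smul_eq_mul]
    have hHint : Integrable ((fun _ => (1:ℝ)) + (L • (S (n+1) - S n) +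
        b • (fun ω => (S (n+1) ω - S n ω) * (S (n+1) ω - S n ω)))) μ :=
      (integrable_const 1).add ((hΔint.smul L).add (hqint.smul b))
    have hGH : (fun ω => Real.exp (L * (S (n+1) ω - S n ω)))
        ≤ᵐ[μ] (fun _ => (1:ℝ)) + (L • (S (n+1) - S n) +
          b • (fun ω => (S (n+1) ω - S n ω) * (S (n+1) ω - S n ω))) := by
      filter_upwards [hbdd n] with ω h
      have hx : |L * (S (n+1) ω - S n ω)| ≤ t := by
        rw [abs_mul, abs_of_pos hL0, ← hLV]
        exact mul_le_mul_of_nonneg_left h hL0.le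
      have hexp := exp_quad_bound ht1.le hx
      have hxx : (L * (S (n+1) ω - S n ω)) ^ 2 =
          L ^ 2 * ((S (n+1) ω - S n ω) * (S (n+1) ω - S n ω)) := by ring
      simp only [Pi.add_apply, Pi.smul_apply, Pi.sub_apply, smul_eq_mul, hb_def]
      nlinarith [hexp, hxx]
    have hHcond : μ[(fun _ => (1:ℝ)) + (L • (S (n+1) - S n) +
        b • (fun ω => (S (n+1) ω - S n ω) * (S (n+1) ω - S n ω))) | 𝓕 n]
        ≤ᵐ[μ] fun ω => 1 + c * g n ω := by
      have e1 := condExp_add (μ := μ) (m := 𝓕 n) (integrable_const (1:ℝ))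
        ((hΔint.smul L).add (hqint.smul b))
      have e2 := condExp_add (μ := μ) (m := 𝓕 n) (hΔint.smul L) (hqint.smul b)
      have e3 := condExp_smul (μ := μ) (m := 𝓕 n) L (S (n+1) - S n)
      have e4 := condExp_smul (μ := μ) (m := 𝓕 n) b
        (fun ω => (S (n+1) ω - S n ω) * (S (n+1) ω - S n ω))
      filter_upwards [e1, e2, e3, e4, hΔcond, hqcond, haeg] with ω h1 h2 h3 h4 h5 h6 h7
      rw [h1]
      simp only [Pi.add_apply, condExp_const (𝓕.le n)]
      rw [h2]
      simp only [Pi.add_apply]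
      rw [h3, h4]
      simp only [Pi.smul_apply, smul_eq_mul]
      simp only [Pi.zero_apply] at h5
      have k1 : L * (μ[S (n+1) - S n|𝓕 n]) ω ≤ 0 := by
        nlinarith [mul_le_mul_of_nonneg_left h5 hL0.le]
      have k2 : b * (μ[(fun ω => (S (n+1) ω - S n ω) * (S (n+1) ω - S n ω))|𝓕 n]) ω
          ≤ b * (V * g n ω) :=
        mul_le_mul_of_nonneg_left h6 hb0.le
      rw [hc_def]
      nlinarith [k1, k2]
    have hGcond : μ[(fun ω => Real.exp (L * (S (n+1) ω - S n ω))) | 𝓕 n]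
        ≤ᵐ[μ] fun ω => 1 + c * g n ω :=
      (condExp_mono hGint hHint hGH).trans hHcond
    rw [hFG]
    refine hpull.le.trans ?_
    filter_upwards [hGcond, haeg] with ω h1 h2
    simp only [Pi.mul_apply]
    have hF0 : 0 < M n ω * Real.exp (-(c * g n ω)) :=
      mul_pos (hMpos n ω) (Real.exp_pos _)
    have hone : Real.exp (-(c * g n ω)) * (1 + c * g n ω) ≤ 1 := by
      have hmul : Real.exp (-(c * g n ω)) * Real.exp (c * g n ω) = 1 := by
        rw [← Real.exp_add]; simp
      have hx1 : c * g n ω + 1 ≤ Real.exp (c * g n ω) := Real.add_one_le_exp _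
      nlinarith [(Real.exp_pos (-(c * g n ω))).le]
    calc M n ω * Real.exp (-(c * g n ω)) * (μ[fun ω => Real.exp (L * (S (n+1) ω - S n ω))|𝓕 n]) ω
        ≤ M n ω * Real.exp (-(c * g n ω)) * (1 + c * g n ω) :=
          mul_le_mul_of_nonneg_left h1 hF0.le
      _ = M n ω * (Real.exp (-(c * g n ω)) * (1 + c * g n ω)) := by ring
      _ ≤ M n ω * 1 := mul_le_mul_of_nonneg_left hone (hMpos n ω).le
      _ = M n ω := mul_one _
  have hSM : Supermartingale M 𝓕 μ := supermartingale_nat hmeasM hMint hcond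
  set ε : ℝ := Real.exp (L * z - c * C) with hε_def
  have hε0 : 0 < ε := Real.exp_pos _
  have hville := ville_ineq 𝓕 M hSM (fun n ω => (hMpos n ω).le) hε0
  have hM0 : (∫ ω, M 0 ω ∂μ) = 1 := by
    simp only [hM_def]
    simp
  rw [hM0] at hville
  have hmono : μ {ω | ∃ i : ℕ, 1 ≤ i ∧ S 0 ω + z ≤ S i ω} ≤ μ {ω | ∃ n, ε ≤ M n ω} := by
    refine measure_mono_ae ?_
    filter_upwards [hsum] with ω hCw hmem
    obtain ⟨i, _, hi⟩ := hmem
    refine ⟨i, ?_⟩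
    simp only [hM_def, hε_def]
    apply Real.exp_le_exp.2
    have h1 : z ≤ S i ω - S 0 ω := by linarith
    have h2 : ∑ j ∈ Finset.range i, g j ω ≤ C := by
      simp only [hg_def]
      exact hCw i
    nlinarith [mul_le_mul_of_nonneg_left h1 hL0.le, mul_le_mul_of_nonneg_left h2 hc0.le]
  refine hmono.trans (hville.trans ?_)
  apply ENNReal.ofReal_le_ofReal
  rw [hε_def, one_div, ← Real.exp_neg]
  apply Real.exp_le_exp.2
  have htz : t * (C + z) = z := by
    rw [ht_def]; field_simp
  have h_tC : t * C ≤ z := by nlinarith [htz, mul_pos ht0 hz]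
  have key2 : (1/2 + 2/9 * t) * t * C ≤ z / 2 := by
    nlinarith [htz, mul_le_mul_of_nonneg_left h_tC ht0.le, mul_pos ht0 hz]
  have hcL : c = (1/2 + 2/9 * t) * t * L := by
    rw [hc_def, hb_def, ← hLV]; ring
  have key : c * C ≤ L * z / 2 := by
    rw [hcL]
    calc (1/2 + 2/9*t)*t*L*C = L * ((1/2 + 2/9*t)*t*C) := by ring
      _ ≤ L * (z/2) := mul_le_mul_of_nonneg_left key2 hL0.le
      _ = L * z / 2 := by ring
  have e1 : z^2/(2*V*(C+z)) = L*z/2 := by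
    rw [hL_def]; field_simp
  rw [neg_le_neg_iff]
  linarith
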